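/- Let M ∈ ℝ^{N×N} be a positive semidefinite matrix with unit diagonal (a correlation matrix). Define arcsin(M) entrywise. Then arcsin(M) − M is positive semidefinite. -/

import Mathlib

open Matrix

section PART1
open Matrix

noncomputable def bb (k : ℕ) : ℝ := (Nat.centralBinom k : ℝ) / 4 ^ k

noncomputable def aa (k : ℕ) : ℝ := bb k / (2 * k + 1)

lemma bb_zero : bb 0 = 1 := by simp [bb]

lemma bb_nonneg (k : ℕ) : 0 ≤ bb k := by
  unfold bb; positivity

lemma bb_succ (k : ℕ) : (2 * k + 2) * bb (k + 1) = (2 * k + 1) * bb k := by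
  have h := Nat.succ_mul_centralBinom_succ k
  have h' : ((k : ℝ) + 1) * (Nat.centralBinom (k + 1) : ℝ)
      = 2 * (2 * k + 1) * (Nat.centralBinom k : ℝ) := by
    exact_mod_cast congrArg (Nat.cast : ℕ → ℝ) h
  have h4 := congrArg (fun z => z / (4:ℝ) ^ (k+1)) h'
  beta_reduce at h4
  unfold bb
  rw [pow_succ] at h4 ⊢
  have hp : (0:ℝ) < 4 ^ k := by positivity
  field_simp at h4 ⊢
  nlinarith [h4]

lemma bb_le_one (k : ℕ) : bb k ≤ 1 := by
  induction k with
  | zero => simp [bb_zero]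
  | succ n ih =>
    have h := bb_succ n
    have hb := bb_nonneg (n + 1)
    nlinarith [bb_nonneg n]

lemma aa_nonneg (k : ℕ) : 0 ≤ aa k := by
  unfold aa bb; positivity

lemma aa_le_one (k : ℕ) : aa k ≤ 1 := by
  unfold aa
  rw [div_le_one (by positivity)]
  have := bb_le_one k
  nlinarith [(Nat.cast_nonneg k : (0:ℝ) ≤ k)]

lemma aa_mul : ∀ k : ℕ, aa k * (2 * k + 1) = bb k := by
  intro k
  unfold aa
  field_simp

lemma summable_master {r : ℝ} (h0 : 0 ≤ r) (h1 : r < 1) :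
    Summable (fun k : ℕ => 3 * (k + 1) * r ^ k) := by
  have h : Summable (fun k : ℕ => (k : ℝ) ^ 1 * r ^ k) :=
    summable_pow_mul_geometric_of_norm_lt_one 1 (by rwa [Real.norm_eq_abs, abs_of_nonneg h0])
  have h2 : Summable (fun k : ℕ => r ^ k) := summable_geometric_of_lt_one h0 h1
  have := (h.add h2).mul_left 3
  refine this.congr fun k => by ring

lemma bound_master {x r c : ℝ} (hx : |x| ≤ r) (hr : r ≤ 1) {k m : ℕ}
    (hc : |c| ≤ 3 * (k + 1)) (hk : k ≤ m) :
    ‖c * x ^ m‖ ≤ 3 * (k + 1) * r ^ k := by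
  have h0 : 0 ≤ r := le_trans (abs_nonneg x) hx
  rw [Real.norm_eq_abs, abs_mul, abs_pow]
  have h1 : |x| ^ m ≤ r ^ m := pow_le_pow_left₀ (abs_nonneg x) hx m
  have h2 : r ^ m ≤ r ^ k := pow_le_pow_of_le_one h0 hr hk
  have hcn : 0 ≤ |c| := abs_nonneg c
  nlinarith [pow_nonneg (abs_nonneg x) m, pow_nonneg h0 k, pow_nonneg h0 m]
end PART1

lemma summable_gen {x : ℝ} (hx : |x| < 1) (c : ℕ → ℝ) (hc : ∀ k, |c k| ≤ 3 * (k + 1))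
    (m : ℕ → ℕ) (hm : ∀ k, k ≤ m k) : Summable fun k => c k * x ^ (m k) :=
  Summable.of_norm_bounded (summable_master (abs_nonneg x) hx)
    fun k => bound_master le_rfl hx.le (hc k) (hm k)

lemma abs_le_aux (k : ℕ) {c : ℝ} (h0 : 0 ≤ c) (h1 : c ≤ 1) : |2 * (k:ℝ) * c| ≤ 3 * (k + 1) := by
  rw [abs_of_nonneg (by positivity)]
  have : (0:ℝ) ≤ k := Nat.cast_nonneg k
  nlinarith

noncomputable def GG (x : ℝ) : ℝ := ∑' k : ℕ, bb k * x ^ (2 * k)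
noncomputable def FF (x : ℝ) : ℝ := ∑' k : ℕ, aa k * x ^ (2 * k + 1)

lemma summable_G {x : ℝ} (hx : |x| < 1) : Summable fun k : ℕ => bb k * x ^ (2 * k) :=
  summable_gen hx _ (fun k => by
    rw [abs_of_nonneg (bb_nonneg k)]
    have := bb_le_one k; have : (0:ℝ) ≤ k := Nat.cast_nonneg k; nlinarith [bb_le_one k])
    _ (fun k => by omega)

lemma summable_U {x : ℝ} (hx : |x| < 1) :
    Summable fun k : ℕ => 2 * (k:ℝ) * bb k * x ^ (2 * k - 1) :=
  summable_gen hx _ (fun k => abs_le_aux k (bb_nonneg k) (bb_le_one k)) _ (fun k => by omega)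

lemma summable_W {x : ℝ} (hx : |x| < 1) :
    Summable fun k : ℕ => 2 * (k:ℝ) * bb k * x ^ (2 * k + 1) :=
  summable_gen hx _ (fun k => abs_le_aux k (bb_nonneg k) (bb_le_one k)) _ (fun k => by omega)

lemma summable_V {x : ℝ} (hx : |x| < 1) : Summable fun k : ℕ => bb k * x ^ (2 * k + 1) :=
  summable_gen hx _ (fun k => by
    rw [abs_of_nonneg (bb_nonneg k)]
    have : (0:ℝ) ≤ k := Nat.cast_nonneg k; nlinarith [bb_le_one k]) _ (fun k => by omega)

lemma summable_F {x : ℝ} (hx : |x| < 1) : Summable fun k : ℕ => aa k * x ^ (2 * k + 1) :=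
  summable_gen hx _ (fun k => by
    rw [abs_of_nonneg (aa_nonneg k)]
    have : (0:ℝ) ≤ k := Nat.cast_nonneg k; nlinarith [aa_le_one k]) _ (fun k => by omega)

/-- termwise derivative of `GG` -/
noncomputable def GG' (x : ℝ) : ℝ := ∑' k : ℕ, bb k * (2 * k * x ^ (2 * k - 1))

lemma hasDerivAt_GG {x : ℝ} (hx : |x| < 1) : HasDerivAt GG (GG' x) x := by
  set r : ℝ := (|x| + 1) / 2 with hr
  have h0 : 0 ≤ r := by positivity
  have hrx : |x| < r := by rw [hr]; linarith
  have hr1 : r < 1 := by rw [hr]; linarith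
  apply hasDerivAt_tsum_of_isPreconnected (summable_master h0 hr1)
    (isOpen_Ioo (a := -r) (b := r)) (isPreconnected_Ioo)
    (g := fun k z => bb k * z ^ (2 * k)) (g' := fun k z => bb k * (2 * k * z ^ (2 * k - 1)))
    (y₀ := 0)
  · intro n y _
    have h := (hasDerivAt_pow (2 * n) y).const_mul (bb n)
    convert h using 1
    · rfl
    push_cast
    ring
  · intro n y hy
    have hyr : |y| ≤ r := by rw [abs_le]; exact ⟨(Set.mem_Ioo.mp hy).1.le, (Set.mem_Ioo.mp hy).2.le⟩
    have : bb n * (2 * n * y ^ (2 * n - 1)) = (2 * (n:ℝ) * bb n) * y ^ (2 * n - 1) := by ring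
    rw [this]
    exact bound_master hyr hr1.le (abs_le_aux n (bb_nonneg n) (bb_le_one n)) (by omega)
  · exact Set.mem_Ioo.mpr ⟨by linarith [abs_nonneg x], by linarith [abs_nonneg x]⟩
  · apply summable_G; rw [abs_zero]; norm_num
  · exact Set.mem_Ioo.mpr (abs_lt.mp hrx)

lemma GG'_eq {x : ℝ} (hx : |x| < 1) : (1 - x ^ 2) * GG' x = x * GG x := by
  set u : ℕ → ℝ := fun k => bb k * (2 * (k:ℝ) * x ^ (2 * k - 1)) with hudef
  set g : ℕ → ℝ := fun k => bb k * x ^ (2 * k) with hgdef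
  have hu : Summable u := (summable_U hx).congr fun k => by simp [hudef]; ring
  have hg : Summable g := summable_G hx
  have hb1 : bb 1 = 1 / 2 := by have := bb_succ 0; rw [bb_zero] at this; push_cast at this; linarith
  have hkey : ∀ k : ℕ, u (k + 1) = x ^ 2 * u k + x * g k := by
    intro k
    cases k with
    | zero => simp [hudef, hgdef, hb1, bb_zero]
    | succ j =>
      have h1 : (2 * ((j:ℝ) + 1) + 2) * bb (j + 1 + 1) = (2 * ((j:ℝ) + 1) + 1) * bb (j + 1) := by
        have := bb_succ (j + 1); push_cast at this ⊢; linarith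
      simp only [hudef, hgdef]
      have e1 : 2 * (j + 1 + 1) - 1 = 2 * j + 3 := by omega
      have e2 : 2 * (j + 1) - 1 = 2 * j + 1 := by omega
      have e3 : 2 * (j + 1) = 2 * j + 2 := by omega
      rw [e1, e2, e3]
      push_cast
      linear_combination x ^ (2 * j + 3) * h1
  have h1 : GG' x = ∑' k : ℕ, u (k + 1) := by
    rw [GG', hu.tsum_eq_zero_add]
    simp [hudef]
  have h2 : (∑' k : ℕ, u (k + 1)) = x ^ 2 * GG' x + x * GG x := by
    calc (∑' k : ℕ, u (k + 1)) = ∑' k : ℕ, (x ^ 2 * u k + x * g k) := tsum_congr hkey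
    _ = (∑' k : ℕ, x ^ 2 * u k) + ∑' k : ℕ, x * g k := (hu.mul_left _).tsum_add (hg.mul_left _)
    _ = x ^ 2 * GG' x + x * GG x := by rw [tsum_mul_left, tsum_mul_left]; rfl
  linear_combination h1.trans h2

lemma const_of_deriv (f : ℝ → ℝ) (hf : ∀ y : ℝ, |y| < 1 → HasDerivAt f 0 y) {x : ℝ}
    (hx : |x| < 1) : f x = f 0 := by
  have hx' := abs_lt.mp hx
  rcases le_or_gt 0 x with h | h
  · have := constant_of_has_deriv_right_zero (f := f) (a := 0) (b := x)
      (fun y hy => by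
        have : |y| < 1 := abs_lt.mpr ⟨by linarith [hy.1], by linarith [hy.2]⟩
        exact (hf y this).continuousAt.continuousWithinAt)
      (fun y hy => by
        have : |y| < 1 := abs_lt.mpr ⟨by linarith [hy.1], by linarith [hy.2]⟩
        exact (hf y this).hasDerivWithinAt)
      x (Set.mem_Icc.mpr ⟨h, le_refl x⟩)
    exact this
  · have := constant_of_has_deriv_right_zero (f := f) (a := x) (b := 0)
      (fun y hy => by
        have : |y| < 1 := abs_lt.mpr ⟨by linarith [hy.1], by linarith [hy.2]⟩
        exact (hf y this).continuousAt.continuousWithinAt)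
      (fun y hy => by
        have : |y| < 1 := abs_lt.mpr ⟨by linarith [hy.1], by linarith [hy.2]⟩
        exact (hf y this).hasDerivWithinAt)
      0 (Set.mem_Icc.mpr ⟨h.le, le_refl 0⟩)
    exact this.symm

lemma GG_zero : GG 0 = 1 := by
  rw [GG, tsum_eq_single 0 (fun k hk => by
    rw [zero_pow (by omega), mul_zero])]
  simp [bb_zero]

lemma one_sub_sq_pos {y : ℝ} (hy : |y| < 1) : 0 < 1 - y ^ 2 := by
  have := abs_lt.mp hy
  nlinarith

lemma GG_eq {x : ℝ} (hx : |x| < 1) : GG x = 1 / Real.sqrt (1 - x ^ 2) := by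
  set H : ℝ → ℝ := fun y => GG y * Real.sqrt (1 - y ^ 2) with hHdef
  have hH : ∀ y : ℝ, |y| < 1 → HasDerivAt H 0 y := by
    intro y hy
    have hpos := one_sub_sq_pos hy
    have hs : 0 < Real.sqrt (1 - y ^ 2) := Real.sqrt_pos.mpr hpos
    have hinner : HasDerivAt (fun z : ℝ => 1 - z ^ 2) (-(2 * y)) y := by
      simpa using ((hasDerivAt_pow 2 y).const_sub 1)
    have hsq : HasDerivAt (fun z : ℝ => Real.sqrt (1 - z ^ 2))
        (-(2 * y) / (2 * Real.sqrt (1 - y ^ 2))) y := hinner.sqrt (ne_of_gt hpos)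
    have h := (hasDerivAt_GG hy).mul hsq
    have hsum : GG' y * Real.sqrt (1 - y ^ 2)
        + GG y * (-(2 * y) / (2 * Real.sqrt (1 - y ^ 2))) = 0 := by
      have hG := GG'_eq hy
      have hss : Real.sqrt (1 - y ^ 2) * Real.sqrt (1 - y ^ 2) = 1 - y ^ 2 :=
        Real.mul_self_sqrt hpos.le
      have e1 : GG' y * Real.sqrt (1 - y ^ 2) = y * GG y / Real.sqrt (1 - y ^ 2) := by
        rw [eq_div_iff hs.ne']
        linear_combination hG + GG' y * hss
      rw [e1]
      field_simp
      ring
    rw [hsum] at h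
    exact h
  have hc := const_of_deriv H hH hx
  have hH0 : H 0 = 1 := by simp [hHdef, GG_zero]
  have hs : 0 < Real.sqrt (1 - x ^ 2) := Real.sqrt_pos.mpr (one_sub_sq_pos hx)
  have hc' : GG x * Real.sqrt (1 - x ^ 2) = 1 := hc.trans hH0
  rw [eq_div_iff hs.ne']
  exact hc'

lemma hasDerivAt_FF {x : ℝ} (hx : |x| < 1) : HasDerivAt FF (GG x) x := by
  set r : ℝ := (|x| + 1) / 2 with hr
  have h0 : 0 ≤ r := by positivity
  have hrx : |x| < r := by rw [hr]; linarith
  have hr1 : r < 1 := by rw [hr]; linarith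
  have key := hasDerivAt_tsum_of_isPreconnected (summable_master h0 hr1)
    (isOpen_Ioo (a := -r) (b := r)) (isPreconnected_Ioo)
    (g := fun k z => aa k * z ^ (2 * k + 1)) (g' := fun k z => bb k * z ^ (2 * k))
    (y₀ := 0) ?_ ?_ ?_ ?_ (Set.mem_Ioo.mpr (abs_lt.mp hrx))
  · exact key
  · intro n y _
    have h := (hasDerivAt_pow (2 * n + 1) y).const_mul (aa n)
    convert h using 1
    · rfl
    push_cast
    have := aa_mul n
    push_cast at this
    linear_combination y ^ (2 * n) * this.symm
  · intro n y hy
    have hyr : |y| ≤ r := by rw [abs_le]; exact ⟨(Set.mem_Ioo.mp hy).1.le, (Set.mem_Ioo.mp hy).2.le⟩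
    refine bound_master hyr hr1.le ?_ (by omega)
    rw [abs_of_nonneg (bb_nonneg n)]
    have : (0:ℝ) ≤ n := Nat.cast_nonneg n
    nlinarith [bb_le_one n]
  · exact Set.mem_Ioo.mpr ⟨by linarith [abs_nonneg x], by linarith [abs_nonneg x]⟩
  · apply summable_F; rw [abs_zero]; norm_num

lemma FF_zero : FF 0 = 0 := by
  have h : ∀ k : ℕ, aa k * (0:ℝ) ^ (2 * k + 1) = 0 := fun k => by
    rw [zero_pow (by omega), mul_zero]
  rw [FF, tsum_congr h, tsum_zero]

lemma FF_eq_arcsin {x : ℝ} (hx : |x| < 1) : FF x = Real.arcsin x := by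
  have hD : ∀ y : ℝ, |y| < 1 → HasDerivAt (fun z => FF z - Real.arcsin z) 0 y := by
    intro y hy
    have h1 := abs_lt.mp hy
    have harc : HasDerivAt Real.arcsin (1 / Real.sqrt (1 - y ^ 2)) y :=
      Real.hasDerivAt_arcsin (by intro h; rw [h] at h1; linarith [h1.1])
        (by intro h; rw [h] at h1; linarith [h1.2])
    have h := (hasDerivAt_FF hy).sub harc
    rw [GG_eq hy, sub_self] at h
    exact h
  have := const_of_deriv _ hD hx
  simp only [FF_zero, Real.arcsin_zero, sub_zero] at this
  linarith [this]

lemma hasSum_arcsin {x : ℝ} (hx : |x| < 1) :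
    HasSum (fun k : ℕ => aa k * x ^ (2 * k + 1)) (Real.arcsin x) := by
  have h := (summable_F hx).hasSum
  rwa [show (∑' k : ℕ, aa k * x ^ (2 * k + 1)) = FF x from rfl, FF_eq_arcsin hx] at h

lemma hasSum_arcsin_tail {x : ℝ} (hx : |x| < 1) :
    HasSum (fun k : ℕ => aa (k + 1) * x ^ (2 * (k + 1) + 1)) (Real.arcsin x - x) := by
  have h := (hasSum_nat_add_iff' (f := fun k : ℕ => aa k * x ^ (2 * k + 1)) 1).mpr
    (hasSum_arcsin hx)
  have ha0 : aa 0 = 1 := by simp [aa, bb_zero]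
  simpa [ha0] using h

section Matrices

variable {N : ℕ}

lemma quad_expand (M : Matrix (Fin N) (Fin N) ℝ) (x : Fin N → ℝ) :
    dotProduct (star x) (M *ᵥ x) = ∑ i, ∑ j, x i * M i j * x j := by
  simp only [dotProduct, mulVec, Pi.star_apply, star_trivial]
  refine Finset.sum_congr rfl fun i _ => ?_
  rw [Finset.mul_sum]
  exact Finset.sum_congr rfl fun j _ => by ring

lemma isHermitian_of_symm {f : Fin N → Fin N → ℝ} (h : ∀ i j, f j i = f i j) :
    (Matrix.of f).IsHermitian := by
  ext i j
  simp only [conjTranspose_apply, of_apply, star_trivial]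
  exact h i j

lemma psd_symm {M : Matrix (Fin N) (Fin N) ℝ} (hM : M.PosSemidef) : ∀ i j, M j i = M i j := by
  intro i j
  have := hM.1
  conv_rhs => rw [← this]
  simp [conjTranspose_apply]

lemma schur {A B : Matrix (Fin N) (Fin N) ℝ} (hA : A.PosSemidef) (hB : B.PosSemidef) :
    PosSemidef (Matrix.of fun i j => A i j * B i j) := by
  obtain ⟨C, hC⟩ : ∃ C : Matrix (Fin N) (Fin N) ℝ, B = Cᴴ * C := by
    open scoped MatrixOrder in exact CStarAlgebra.nonneg_iff_eq_star_mul_self.mp hB.nonneg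
  have hBij : ∀ i j, B i j = ∑ k, C k i * C k j := by
    intro i j
    rw [hC]
    simp [Matrix.mul_apply, conjTranspose_apply]
  refine posSemidef_iff_dotProduct_mulVec.mpr ⟨?_, ?_⟩
  · exact isHermitian_of_symm fun i j => by rw [psd_symm hA, psd_symm hB]
  · intro x
    rw [quad_expand]
    simp only [of_apply]
    have step1 : ∀ i j, x i * (A i j * B i j) * x j
        = ∑ k, (C k i * x i) * A i j * (C k j * x j) := by
      intro i j
      rw [hBij i j]
      simp only [Finset.mul_sum, Finset.sum_mul]
      exact Finset.sum_congr rfl fun k _ => by ring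
    have key : ∑ i, ∑ j, x i * (A i j * B i j) * x j
        = ∑ k, ∑ i, ∑ j, (C k i * x i) * A i j * (C k j * x j) := by
      calc ∑ i, ∑ j, x i * (A i j * B i j) * x j
          = ∑ i, ∑ j, ∑ k, (C k i * x i) * A i j * (C k j * x j) :=
            Finset.sum_congr rfl fun i _ => Finset.sum_congr rfl fun j _ => step1 i j
        _ = ∑ i, ∑ k, ∑ j, (C k i * x i) * A i j * (C k j * x j) :=
            Finset.sum_congr rfl fun i _ => Finset.sum_comm
        _ = ∑ k, ∑ i, ∑ j, (C k i * x i) * A i j * (C k j * x j) := Finset.sum_comm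
    rw [key]
    refine Finset.sum_nonneg fun k _ => ?_
    have h := hA.dotProduct_mulVec_nonneg (fun i => C k i * x i)
    rw [quad_expand] at h
    exact h

lemma psd_pow {M : Matrix (Fin N) (Fin N) ℝ} (hM : M.PosSemidef) (n : ℕ) :
    PosSemidef (Matrix.of fun i j => (M i j) ^ n) := by
  induction n with
  | zero =>
    refine posSemidef_iff_dotProduct_mulVec.mpr ⟨?_, ?_⟩
    · exact isHermitian_of_symm fun i j => rfl
    · intro x
      rw [quad_expand]
      simp only [of_apply, pow_zero, mul_one]
      rw [← Finset.sum_mul_sum]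
      exact mul_self_nonneg _
  | succ n ih =>
    have := schur ih hM
    convert this using 2 with i j
    funext i j
    simp [pow_succ]

lemma psd_arcsin_strict {M : Matrix (Fin N) (Fin N) ℝ} (hM : M.PosSemidef)
    (hlt : ∀ i j, |M i j| < 1) :
    PosSemidef (Matrix.of fun i j => Real.arcsin (M i j) - M i j) := by
  refine posSemidef_iff_dotProduct_mulVec.mpr ⟨?_, ?_⟩
  · refine isHermitian_of_symm fun i j => by rw [psd_symm hM]
  · intro x
    rw [quad_expand]
    simp only [of_apply]
    have hs : ∀ i j, HasSum (fun k : ℕ => x i * x j * (aa (k + 1) * (M i j) ^ (2 * (k + 1) + 1)))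
        (x i * (Real.arcsin (M i j) - M i j) * x j) := by
      intro i j
      have h := (hasSum_arcsin_tail (hlt i j)).mul_left (x i * x j)
      have e : x i * x j * (Real.arcsin (M i j) - M i j)
          = x i * (Real.arcsin (M i j) - M i j) * x j := by ring
      rwa [e] at h
    have H : HasSum (fun k : ℕ => ∑ i, ∑ j, x i * x j * (aa (k + 1) * (M i j) ^ (2 * (k + 1) + 1)))
        (∑ i, ∑ j, x i * (Real.arcsin (M i j) - M i j) * x j) :=
      hasSum_sum fun i _ => hasSum_sum fun j _ => hs i j
    refine hasSum_le (fun k => ?_) hasSum_zero H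
    have hp := (psd_pow hM (2 * (k + 1) + 1)).dotProduct_mulVec_nonneg x
    rw [quad_expand] at hp
    simp only [of_apply] at hp
    have e : ∑ i, ∑ j, x i * x j * (aa (k + 1) * (M i j) ^ (2 * (k + 1) + 1))
        = aa (k + 1) * ∑ i, ∑ j, x i * (M i j) ^ (2 * (k + 1) + 1) * x j := by
      rw [Finset.mul_sum]
      refine Finset.sum_congr rfl fun i _ => ?_
      rw [Finset.mul_sum]
      exact Finset.sum_congr rfl fun j _ => by ring
    rw [e]
    exact mul_nonneg (aa_nonneg _) hp

end Matrices

lemma abs_entry_le_one {M : Matrix (Fin N) (Fin N) ℝ} (hpsd : M.PosSemidef)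
    (hdiag : ∀ i, M i i = 1) (i j : Fin N) : |M i j| ≤ 1 := by
  have hsym := psd_symm hpsd
  have key : ∀ c : ℝ, 0 ≤ M i i + c * M i j + c * M j i + c * c * M j j := by
    intro c
    have h := hpsd.dotProduct_mulVec_nonneg (fun t => (if t = i then (1:ℝ) else 0) + c * (if t = j then 1 else 0))
    rw [quad_expand] at h
    have e : ∑ s, ∑ t, ((if s = i then (1:ℝ) else 0) + c * (if s = j then 1 else 0)) * M s t
        * ((if t = i then (1:ℝ) else 0) + c * (if t = j then 1 else 0))
        = M i i + c * M i j + c * M j i + c * c * M j j := by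
      simp only [add_mul, mul_add, ite_mul, mul_ite, one_mul, mul_one, zero_mul, mul_zero,
        Finset.sum_add_distrib, Finset.sum_ite_eq, Finset.sum_ite_eq', Finset.mem_univ, if_true]
      ring
    rw [e] at h
    exact h
  have h1 := key 1
  have h2 := key (-1)
  rw [hdiag i, hdiag j, hsym i j] at h1 h2
  rw [abs_le]
  constructor <;> nlinarith

/-- If `M` is a real positive semidefinite matrix with unit diagonal
(a correlation matrix), then the entrywise matrix `arcsin(M) − M` is positive
semidefinite. -/
theorem stmt15 (N : ℕ) (M : Matrix (Fin N) (Fin N) ℝ)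
    (hpsd : M.PosSemidef) (hdiag : ∀ i, M i i = 1) :
    (Matrix.of fun i j => Real.arcsin (M i j) - M i j).PosSemidef := by
  have hsym := psd_symm hpsd
  refine posSemidef_iff_dotProduct_mulVec.mpr ⟨?_, ?_⟩
  · exact isHermitian_of_symm fun i j => by rw [hsym]
  · intro x
    rw [quad_expand]
    simp only [of_apply]
    set ψ : ℝ → ℝ := fun c => ∑ i, ∑ j, x i * (Real.arcsin (c * M i j) - c * M i j) * x j
      with hψ
    suffices h : 0 ≤ ψ 1 by simpa [hψ] using h
    have hcont : Continuous ψ := by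
      refine continuous_finset_sum _ fun i _ => continuous_finset_sum _ fun j _ => ?_
      have h1 : Continuous fun c : ℝ => c * M i j := continuous_mul_right _
      exact (continuous_const.mul ((Real.continuous_arcsin.comp h1).sub h1)).mul continuous_const
    have hnn : ∀ c ∈ Set.Ioo (0:ℝ) 1, 0 ≤ ψ c := by
      intro c hc
      obtain ⟨hc0, hc1⟩ := hc
      have hMc : (Matrix.of fun i j => c * M i j).PosSemidef := by
        refine posSemidef_iff_dotProduct_mulVec.mpr ⟨?_, ?_⟩
        · exact isHermitian_of_symm fun i j => by rw [hsym]
        · intro y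
          rw [quad_expand]
          simp only [of_apply]
          have h := hpsd.dotProduct_mulVec_nonneg y
          rw [quad_expand] at h
          have e : ∑ i, ∑ j, y i * (c * M i j) * y j = c * ∑ i, ∑ j, y i * M i j * y j := by
            rw [Finset.mul_sum]
            refine Finset.sum_congr rfl fun i _ => ?_
            rw [Finset.mul_sum]
            exact Finset.sum_congr rfl fun j _ => by ring
          rw [e]
          exact mul_nonneg hc0.le h
      have hlt : ∀ i j, |(Matrix.of fun i j => c * M i j) i j| < 1 := by
        intro i j
        simp only [of_apply, abs_mul, abs_of_pos hc0]
        calc c * |M i j| ≤ c * 1 := by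
              have := abs_entry_le_one hpsd hdiag i j
              nlinarith
          _ < 1 := by linarith
      have h := (psd_arcsin_strict hMc hlt).dotProduct_mulVec_nonneg x
      rw [quad_expand] at h
      simp only [of_apply] at h
      exact h
    have hne : (1:ℝ) ∈ closure (Set.Ioo (0:ℝ) 1) := by
      rw [closure_Ioo (by norm_num : (0:ℝ) ≠ 1)]
      exact Set.mem_Icc.mpr ⟨by norm_num, le_refl 1⟩
    haveI := mem_closure_iff_nhdsWithin_neBot.mp hne
    have htend : Filter.Tendsto ψ (nhdsWithin 1 (Set.Ioo (0:ℝ) 1)) (nhds (ψ 1)) :=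
      (hcont.tendsto 1).mono_left nhdsWithin_le_nhds
    exact ge_of_tendsto htend (eventually_nhdsWithin_of_forall hnn)
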